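/- Let T and P be lobsters with |V(P)| ≥ 2, let B = (b_1,…,b_s) be a backbone of P, and for each i ∈ {1,…,s} let P_i be the connected component of P − E(B) containing b_i. Then P is a minor of T if and only if there exist a path C = (c_1,…,c_t) in T and indices 1 = z_1 < z_2 < … < z_{s+1} = t+1 such that for every i ∈ {1,…,s} there is a minor embedding f_i of P_i in the tree T_{z_i, z_{i+1}−1} with f_i(w_i) = b_i, where T_{z_i, z_{i+1}−1} is obtained from the union of the connected components of T − E(C) containing c_{z_i},…,c_{z_{i+1}−1} by contracting the vertex set {c_{z_i},…,c_{z_{i+1}−1}} to a single new vertex w_i. -/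

import Mathlib

/-- A minor embedding of `P` in `T`: a surjective `f : V(T) → V(P)` with connected preimages
of vertices such that every edge of `P` is realized by an edge of `T`. -/
def IsMinorEmbedding {V W : Type*} (T : SimpleGraph V) (P : SimpleGraph W) (f : V → W) : Prop :=
  Function.Surjective f ∧
  (∀ w : W, ((T.induce (f ⁻¹' {w})).Connected)) ∧
  (∀ ⦃u v : W⦄, P.Adj u v → ∃ u' v', T.Adj u' v' ∧ f u' = u ∧ f v' = v)

section Contraction
variable {V : Type*} (T : SimpleGraph V) {c₁ cₜ : V} (C : T.Walk c₁ cₜ)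

/-- The forest `T − E(C)`. -/
def forestOf : SimpleGraph V := T.deleteEdges {e | e ∈ C.edges}

/-- Membership in the union of the connected components of `T − E(C)` containing
`c_l,…,c_r` (0-based positions on `C`). -/
def inComps (l r : ℕ) (v : V) : Prop :=
  ∃ j, l ≤ j ∧ j ≤ r ∧ (forestOf T C).Reachable (C.support.getD j c₁) v

/-- `v` is one of the contracted vertices `c_l,…,c_r`. -/
def isCore (l r : ℕ) (v : V) : Prop :=
  ∃ j, l ≤ j ∧ j ≤ r ∧ C.support.getD j c₁ = v

/-- Vertices of the contracted tree `T_{l,r}`: the new vertex `w` (`none`) obtained by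
contracting `{c_l,…,c_r}`, together with the remaining vertices of the components. -/
def ContrVert (l r : ℕ) : Type _ :=
  Option {v : V // inComps T C l r v ∧ ¬ isCore T C l r v}

/-- Base adjacency of `T_{l,r}`: the contracted vertex is adjacent to every vertex adjacent
(in `T − E(C)`) to some `c_j`, `l ≤ j ≤ r`; other edges of the forest are kept. -/
def ContrRel (l r : ℕ) : ContrVert T C l r → ContrVert T C l r → Prop
  | none, some v => ∃ w, isCore T C l r w ∧ (forestOf T C).Adj w v.1
  | some v, some v' => (forestOf T C).Adj v.1 v'.1
  | _, _ => False

/-- The contracted tree `T_{l,r}`. -/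
def ContrTree (l r : ℕ) : SimpleGraph (ContrVert T C l r) :=
  SimpleGraph.fromRel (ContrRel T C l r)

end Contraction

section Component
variable {W : Type*} (P : SimpleGraph W) {b₁ bₛ : W} (B : P.Walk b₁ bₛ)

/-- The vertex set of the connected component `P_i` of `P − E(B)` containing `b_i`. -/
def compSet (i : ℕ) : Set W :=
  {v | (P.deleteEdges {e | e ∈ B.edges}).Reachable (B.support.getD i b₁) v}

/-- The component `P_i` of `P − E(B)` containing `b_i`, as a graph. -/
def compGraph (i : ℕ) : SimpleGraph (compSet P B i) :=
  (P.deleteEdges {e | e ∈ B.edges}).induce (compSet P B i)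

/-- The vertex `b_i` as a vertex of `P_i`. -/
def compRoot (i : ℕ) : compSet P B i :=
  ⟨B.support.getD i b₁, SimpleGraph.Reachable.refl _⟩

end Component


open SimpleGraph Walk

section AuxWalk
variable {V : Type*} {G : SimpleGraph V} {u v : V}

lemma aux_supp_getElem (p : G.Walk u v) (j : ℕ) (h : j < p.support.length) :
    p.support[j] = p.getVert j := by
  induction p generalizing j with
  | nil =>
    simp only [Walk.support_nil, List.length_singleton] at h
    obtain rfl : j = 0 := Nat.lt_one_iff.mp h
    rfl
  | cons h' p ih =>
    cases j with
    | zero => rfl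
    | succ j =>
      simp only [Walk.support_cons, Walk.getVert_cons_succ]
      rw [List.getElem_cons_succ]
      exact ih j (by simpa [Walk.length_support] using h)

lemma aux_getD (p : G.Walk u v) (j : ℕ) (h : j < p.support.length) (d : V) :
    p.support.getD j d = p.getVert j := by
  rw [List.getD_eq_getElem p.support d h, aux_supp_getElem]

lemma aux_getD_mem (p : G.Walk u v) (j : ℕ) : p.support.getD j u ∈ p.support := by
  rcases lt_or_ge j p.support.length with h | h
  · rw [List.getD_eq_getElem p.support u h]; exact List.getElem_mem _
  · rw [List.getD_eq_default p.support u h]; exact p.start_mem_support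

lemma aux_adj_getVert (p : G.Walk u v) {j : ℕ} (h : j + 1 < p.support.length) :
    G.Adj (p.getVert j) (p.getVert (j + 1)) :=
  p.adj_getVert_succ (by simpa [Walk.length_support] using h)

lemma aux_edge_mem (p : G.Walk u v) {j : ℕ} (h : j + 1 < p.support.length) :
    s(p.getVert j, p.getVert (j + 1)) ∈ p.edges := by
  induction p generalizing j with
  | nil => simp [Walk.length_support] at h
  | cons h' p ih =>
    cases j with
    | zero =>
      simp [Walk.getVert_zero, Walk.getVert_cons_succ, Walk.edges_cons]
    | succ j =>
      simp only [Walk.getVert_cons_succ, Walk.edges_cons]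
      exact List.mem_cons_of_mem _ (ih (by simpa [Walk.length_support] using h))

lemma aux_mem_edges (p : G.Walk u v) {e : Sym2 V} (h : e ∈ p.edges) :
    ∃ j, j + 1 < p.support.length ∧ e = s(p.getVert j, p.getVert (j + 1)) := by
  induction p with
  | nil => simp at h
  | cons h' p ih =>
    rw [Walk.edges_cons] at h
    rcases List.mem_cons.mp h with h | h
    · exact ⟨0, by simp [Walk.length_support], by simpa [Walk.getVert_zero, Walk.getVert_cons_succ] using h⟩
    · obtain ⟨j, hj, he⟩ := ih h
      exact ⟨j + 1, by simpa [Walk.length_support] using Nat.succ_lt_succ (by simpa [Walk.length_support] using hj),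
        by simpa [Walk.getVert_cons_succ] using he⟩

lemma aux_getVert_inj (p : G.Walk u v) (hp : p.IsPath) {j j' : ℕ}
    (hj : j < p.support.length) (hj' : j' < p.support.length)
    (h : p.getVert j = p.getVert j') : j = j' := by
  have := hp.support_nodup
  rw [← aux_supp_getElem p j hj, ← aux_supp_getElem p j' hj'] at h
  exact (List.Nodup.getElem_inj_iff this).mp h

lemma aux_mem_support (p : G.Walk u v) {x : V} (h : x ∈ p.support) :
    ∃ j, j + 1 ≤ p.support.length ∧ p.getVert j = x := by
  obtain ⟨n, hn, hle⟩ := Walk.mem_support_iff_exists_getVert.mp h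
  exact ⟨n, by simpa [Walk.length_support] using Nat.succ_le_succ hle, hn⟩

/-- Every vertex is reachable, in the forest obtained by deleting the edges of a walk `p`,
from some vertex of `p`. -/
lemma aux_cover (hconn : G.Connected) (p : G.Walk u v) (x : V) :
    ∃ j, j + 1 ≤ p.support.length ∧
      (G.deleteEdges {e | e ∈ p.edges}).Reachable (p.getVert j) x := by
  have key : ∀ (y z : V) (_ : G.Walk y z) (_ : ∃ j, j + 1 ≤ p.support.length ∧
      (G.deleteEdges {e | e ∈ p.edges}).Reachable (p.getVert j) z),
      ∃ j, j + 1 ≤ p.support.length ∧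
      (G.deleteEdges {e | e ∈ p.edges}).Reachable (p.getVert j) y := by
    intro y z w
    induction w with
    | nil => exact fun h => h
    | @cons c a d h' w ih =>
      intro hd
      obtain ⟨j, hj, hr⟩ := ih hd
      by_cases he : s(c, a) ∈ p.edges
      · have hx : c ∈ p.support := p.fst_mem_support_of_mem_edges he
        obtain ⟨j', hj', hx'⟩ := aux_mem_support p hx
        exact ⟨j', hj', by rw [hx']⟩
      · refine ⟨j, hj, hr.trans ?_⟩
        exact (SimpleGraph.deleteEdges_adj.mpr ⟨h', he⟩).symm.reachable
  obtain ⟨w⟩ := hconn x u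
  refine key x u w ⟨0, ?_, ?_⟩
  · have := p.length_support; omega
  · rw [Walk.getVert_zero]

lemma aux_reach_del {s : Set (Sym2 V)} {x y : V} (w : G.Walk x y)
    (h : ∀ e ∈ w.edges, e ∉ s) : (G.deleteEdges s).Reachable x y :=
  ⟨w.toDeleteEdges s h⟩

/-- In a tree, if a path `r` from `x` to `y` has all edges inside `Ep`, while `x` and `y` are
reachable avoiding `Ep`, then `x = y`. -/
lemma aux_unique_path_edges [DecidableEq V] (hG : G.IsTree) {Ep : Set (Sym2 V)} {x y : V}
    (r : G.Walk x y) (hr : r.IsPath) (hre : ∀ e ∈ r.edges, e ∈ Ep)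
    (h : (G.deleteEdges Ep).Reachable x y) : x = y := by
  obtain ⟨q0⟩ := h
  have hq0 := q0.bypass_isPath
  have hq0e : ∀ e ∈ q0.bypass.edges, e ∈ (G.deleteEdges Ep).edgeSet :=
    fun e he => q0.bypass.edges_subset_edgeSet he
  have hGe : ∀ e ∈ q0.bypass.edges, e ∈ G.edgeSet := by
    intro e he
    exact SimpleGraph.edgeSet_mono (SimpleGraph.deleteEdges_le _) (hq0e e he)
  set qG := q0.bypass.transfer G hGe with hqG
  have hqGp : qG.IsPath := hq0.transfer _
  have hqGe : ∀ e ∈ qG.edges, e ∉ Ep := by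
    intro e he
    rw [hqG, Walk.edges_transfer] at he
    have := hq0e e he
    rw [SimpleGraph.edgeSet_deleteEdges] at this
    exact this.2
  have : r = qG := (hG.existsUnique_path x y).unique hr hqGp
  cases hre' : r.edges with
  | nil =>
    have : r.length = 0 := by
      have := congrArg List.length hre'
      simpa [Walk.length_edges] using this
    exact Walk.eq_of_length_eq_zero this
  | cons e es =>
    exfalso
    have he1 : e ∈ r.edges := by rw [hre']; exact List.mem_cons_self
    have he2 : e ∈ qG.edges := by rw [← this]; exact he1
    exact hqGe e he2 (hre e he1)

/-- Distinct vertices of a path `p` in a tree are separated by deleting the edges of `p`. -/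
lemma aux_sep (hG : G.IsTree) (p : G.Walk u v) (hp : p.IsPath) {j j' : ℕ}
    (hj : j + 1 ≤ p.support.length) (hj' : j' + 1 ≤ p.support.length)
    (h : (G.deleteEdges {e | e ∈ p.edges}).Reachable (p.getVert j) (p.getVert j')) :
    j = j' := by
  classical
  set x := p.getVert j with hx
  set y := p.getVert j' with hy
  refine aux_getVert_inj p hp (by omega) (by omega) ?_
  rw [← hx, ← hy]
  have hxs : x ∈ p.support := Walk.mem_support_iff_exists_getVert.mpr
    ⟨j, rfl, by simp [Walk.length_support] at hj; omega⟩
  by_cases hys : y ∈ (p.dropUntil x hxs).support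
  · set r := (p.dropUntil x hxs).takeUntil y hys with hr
    have hrp : r.IsPath := (hp.dropUntil hxs).takeUntil hys
    have hre : ∀ e ∈ r.edges, e ∈ {e : Sym2 V | e ∈ p.edges} := by
      intro e he
      exact Walk.edges_dropUntil_subset p hxs (Walk.edges_takeUntil_subset _ hys he)
    exact aux_unique_path_edges hG r hrp hre h
  · have hys' : y ∈ (p.takeUntil x hxs).support := by
      have : y ∈ p.support := Walk.mem_support_iff_exists_getVert.mpr
        ⟨j', rfl, by simp [Walk.length_support] at hj'; omega⟩
      rw [← Walk.take_spec p hxs, Walk.mem_support_append_iff] at this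
      tauto
    set r := (p.takeUntil x hxs).dropUntil y hys' with hr
    have hrp : r.IsPath := (hp.takeUntil hxs).dropUntil hys'
    have hre : ∀ e ∈ r.edges, e ∈ {e : Sym2 V | e ∈ p.edges} := by
      intro e he
      exact Walk.edges_takeUntil_subset p hxs (Walk.edges_dropUntil_subset _ hys' he)
    exact (aux_unique_path_edges hG r hrp hre h.symm).symm

end AuxWalk

section AuxGraph
variable {V X : Type*} {G : SimpleGraph V} {H : SimpleGraph X}

lemma aux_reach_map (m : V → X) (hm : ∀ a b, G.Adj a b → H.Reachable (m a) (m b))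
    {x y : V} (h : G.Reachable x y) : H.Reachable (m x) (m y) := by
  obtain ⟨w⟩ := h
  induction w with
  | nil => rfl
  | cons h' w ih => exact (hm _ _ h').trans ih

lemma aux_walk_support {A : Set V} {a b : ↥A} (p : (G.induce A).Walk a b) :
    ∃ w : G.Walk a.1 b.1, ∀ x ∈ w.support, x ∈ A := by
  induction p with
  | nil => exact ⟨Walk.nil, by simp [Subtype.coe_prop]⟩
  | @cons x y z h p ih =>
    obtain ⟨w, hw⟩ := ih
    have hadj : G.Adj x.1 y.1 := by simpa [SimpleGraph.induce] using h
    refine ⟨Walk.cons hadj w, ?_⟩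
    intro t ht
    rw [Walk.support_cons] at ht
    rcases List.mem_cons.mp ht with rfl | ht
    · exact x.2
    · exact hw t ht

lemma aux_reach_induce {A : Set V} {x y : V} (w : G.Walk x y)
    (hs : ∀ a ∈ w.support, a ∈ A) (hx : x ∈ A) (hy : y ∈ A) :
    (G.induce A).Reachable ⟨x, hx⟩ ⟨y, hy⟩ := by
  induction w with
  | nil => rfl
  | @cons x a z h w ih =>
    have ha : a ∈ A := hs a (by simp [Walk.support_cons])
    have : (G.induce A).Adj ⟨x, hx⟩ ⟨a, ha⟩ := by simpa [SimpleGraph.induce] using h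
    exact this.reachable.trans (ih (fun t ht => hs t (by simp [Walk.support_cons, ht])) ha hy)

lemma aux_connected_induce {A : Set V} (hne : A.Nonempty)
    (h : ∀ x (hx : x ∈ A) y (hy : y ∈ A), (G.induce A).Reachable ⟨x, hx⟩ ⟨y, hy⟩) :
    (G.induce A).Connected := by
  rw [SimpleGraph.connected_iff]
  exact ⟨fun a b => by cases a; cases b; exact h _ _ _ _, ⟨⟨hne.choose, hne.choose_spec⟩⟩⟩

end AuxGraph

section ForwardAux
open SimpleGraph Walk

variable {V W : Type*}

lemma aux_bridge {T : SimpleGraph V} (hT : T.IsTree) {x y : V} (h : T.Adj x y) :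
    ¬ (T.deleteEdges {s(x,y)}).Reachable x y := by
  have hb := (SimpleGraph.isAcyclic_iff_forall_edge_isBridge.mp hT.2)
    (show s(x,y) ∈ T.edgeSet from h)
  rw [SimpleGraph.isBridge_iff] at hb
  exact hb

/-- Two vertices of the same fiber are connected avoiding any edge that is not internal
to the fiber. -/
lemma aux_fibreach {T : SimpleGraph V} {f : V → W}
    (hconn : ∀ w : W, ((T.induce (f ⁻¹' {w})).Connected))
    (p : W) (D : Sym2 V) (hD : ∀ a b : V, s(a,b) = D → ¬(f a = p ∧ f b = p))
    (a b : V) (ha : f a = p) (hb : f b = p) :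
    (T.deleteEdges {D}).Reachable a b := by
  have hr : (T.induce (f ⁻¹' {p})).Reachable ⟨a, ha⟩ ⟨b, hb⟩ :=
    (hconn p).preconnected _ _
  obtain ⟨q⟩ := hr
  obtain ⟨w, hw⟩ := aux_walk_support q
  refine aux_reach_del w ?_
  intro e he hemem
  have heD : e = D := hemem
  obtain ⟨j, hj, hje⟩ := aux_mem_edges w he
  have h1 : w.getVert j ∈ w.support :=
    Walk.mem_support_iff_exists_getVert.mpr ⟨j, rfl, by rw [Walk.length_support] at hj; omega⟩
  have h2 : w.getVert (j+1) ∈ w.support :=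
    Walk.mem_support_iff_exists_getVert.mpr ⟨j+1, rfl, by rw [Walk.length_support] at hj; omega⟩
  exact hD _ _ (hje.symm.trans heD) ⟨hw _ h1, hw _ h2⟩

/-- Every edge of a tree `T` whose endpoints lie in distinct fibers projects, under a minor
embedding, to equal values or adjacent values. -/
lemma aux_hom {T : SimpleGraph V} {P : SimpleGraph W} (hT : T.IsTree) (hP : P.IsTree)
    {f : V → W} (hf : IsMinorEmbedding T P f) :
    ∀ x y : V, T.Adj x y → f x = f y ∨ P.Adj (f x) (f y) := by
  obtain ⟨hsurj, hconn, hedge⟩ := hf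
  intro x y hxy
  by_cases hfe : f x = f y
  · exact Or.inl hfe
  refine Or.inr ?_
  by_contra hnadj
  set D := s(x,y) with hDdef
  have hD : ∀ (p : W) (a b : V), s(a,b) = D → ¬(f a = p ∧ f b = p) := by
    intro p a b hab ⟨ha, hb⟩
    rcases Sym2.eq_iff.mp hab with ⟨rfl, rfl⟩ | ⟨rfl, rfl⟩
    · exact hfe (ha.trans hb.symm)
    · exact hfe (hb.trans ha.symm)
  set SW : W → Prop := fun p => ∃ a, f a = p ∧ (T.deleteEdges {D}).Reachable x a with hSW
  have hedgeiff : ∀ p q : W, P.Adj p q → (SW p ↔ SW q) := by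
    intro p q hpq
    obtain ⟨a0, b0, hadj0, ha0, hb0⟩ := hedge hpq
    by_cases hD0 : s(a0, b0) = D
    · exfalso
      rcases Sym2.eq_iff.mp hD0 with ⟨rfl, rfl⟩ | ⟨rfl, rfl⟩
      · exact hnadj (ha0 ▸ hb0 ▸ hpq)
      · exact hnadj (hb0 ▸ ha0 ▸ hpq.symm)
    · have hstep : (T.deleteEdges {D}).Reachable a0 b0 :=
        (SimpleGraph.deleteEdges_adj.mpr ⟨hadj0, by simpa using hD0⟩).reachable
      constructor
      · rintro ⟨a, ha, hra⟩
        exact ⟨b0, hb0, (hra.trans (aux_fibreach hconn p D (hD p) a a0 ha ha0)).trans hstep⟩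
      · rintro ⟨b, hb, hrb⟩
        exact ⟨a0, ha0, (hrb.trans (aux_fibreach hconn q D (hD q) b b0 hb hb0)).trans hstep.symm⟩
  have hchainSW : ∀ (p q : W), P.Reachable p q → (SW p ↔ SW q) := by
    intro p q h
    obtain ⟨wk⟩ := h
    induction wk with
    | nil => rfl
    | cons h' wk ih => exact (hedgeiff _ _ h').trans ih
  have hx : SW (f x) := ⟨x, rfl, SimpleGraph.Reachable.refl _⟩
  have hy : SW (f y) := (hchainSW _ _ (hP.1 (f x) (f y))).mp hx
  obtain ⟨b, hb, hrb⟩ := hy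
  have : (T.deleteEdges {D}).Reachable x y :=
    hrb.trans (aux_fibreach hconn (f y) D (hD (f y)) b y hb rfl)
  exact aux_bridge hT hxy this

/-- A path has a prefix, up to position `j`, avoiding the edge at position `j`. -/
lemma aux_prefix {G : SimpleGraph V} {u v : V} (p : G.Walk u v) (hp : p.IsPath) {j : ℕ}
    (h : j + 1 < p.support.length) :
    ∃ q : G.Walk u (p.getVert j), s(p.getVert j, p.getVert (j+1)) ∉ q.edges := by
  induction p generalizing j with
  | nil => rw [Walk.support_nil] at h; simp at h
  | @cons a c d hadj q ih =>
    cases j with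
    | zero =>
      exact ⟨Walk.nil, fun hh => nomatch hh⟩
    | succ r =>
      simp only [Walk.getVert_cons_succ]
      obtain ⟨q1, hq1⟩ := ih ((Walk.cons_isPath_iff _ _).mp hp).1
        (j := r) (by rw [Walk.support_cons, List.length_cons] at h; omega)
      refine ⟨Walk.cons hadj q1, ?_⟩
      rw [Walk.edges_cons]
      intro hmem
      rcases List.mem_cons.mp hmem with hmem | hmem
      · have h2 : r + 1 ≤ q.length := by
          rw [Walk.support_cons, List.length_cons, Walk.length_support] at h; omega
        have : a ∈ q.support := by
          rcases Sym2.eq_iff.mp hmem with ⟨h3, h4⟩ | ⟨h3, h4⟩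
          · exact Walk.mem_support_iff_exists_getVert.mpr ⟨r, h3, by omega⟩
          · exact Walk.mem_support_iff_exists_getVert.mpr ⟨r+1, h4, by omega⟩
        exact ((Walk.cons_isPath_iff _ _).mp hp).2 this
      · exact hq1 hmem

/-- A path has a suffix, from position `j+1`, avoiding the edge at position `j`. -/
lemma aux_suffix {G : SimpleGraph V} {u v : V} (p : G.Walk u v) (hp : p.IsPath) {j : ℕ}
    (h : j + 1 < p.support.length) :
    ∃ q : G.Walk (p.getVert (j+1)) v, s(p.getVert j, p.getVert (j+1)) ∉ q.edges := by
  induction p generalizing j with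
  | nil => rw [Walk.support_nil] at h; simp at h
  | @cons a c d hadj q ih =>
    cases j with
    | zero =>
      rw [show (Walk.cons hadj q).getVert (0+1) = c from Walk.getVert_zero q,
        show (Walk.cons hadj q).getVert 0 = a from rfl]
      refine ⟨q, ?_⟩
      intro hmem
      exact ((Walk.cons_isPath_iff _ _).mp hp).2 (Walk.fst_mem_support_of_mem_edges q hmem)
    | succ r =>
      simp only [Walk.getVert_cons_succ]
      exact ih ((Walk.cons_isPath_iff _ _).mp hp).1
        (j := r) (by rw [Walk.support_cons, List.length_cons] at h; omega)

end ForwardAux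

section Backward
open SimpleGraph Walk

variable {V W : Type*}

lemma aux_backward (T : SimpleGraph V) (P : SimpleGraph W)
    (hT : T.IsTree) (hP : P.IsTree)
    {b₁ bₛ : W} (B : P.Walk b₁ bₛ) (hB : B.IsPath)
    {c₁ cₜ : V} (C : T.Walk c₁ cₜ) (hC : C.IsPath) (z : ℕ → ℕ) (hz0 : z 0 = 0)
    (hzlen : z B.support.length = C.support.length)
    (hzmono : ∀ i < B.support.length, z i < z (i + 1))
    (hgex : ∀ i < B.support.length,
      ∃ g : ContrVert T C (z i) (z (i + 1) - 1) → compSet P B i,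
        IsMinorEmbedding (ContrTree T C (z i) (z (i + 1) - 1)) (compGraph P B i) g ∧
        g none = compRoot P B i) :
    ∃ f : V → W, IsMinorEmbedding T P f := by
  classical
  set s := B.support.length with hs
  set t := C.support.length with ht
  have hs1 : 1 ≤ s := by rw [hs, Walk.length_support]; omega
  have ht1 : 1 ≤ t := by rw [ht, Walk.length_support]; omega
  choose g hgme hgroot using hgex
  -- weak and strict monotonicity of z
  have hzw : ∀ i i', i ≤ i' → i' ≤ s → z i ≤ z i' := by
    intro i i' h h'
    induction i' with
    | zero =>
      have : i = 0 := by omega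
      rw [this]
    | succ k ih =>
      rcases Nat.lt_or_ge i (k+1) with hlt | hge
      · have h1 : z i ≤ z k := ih (by omega) (by omega)
        have h2 := hzmono k (by omega)
        omega
      · have : i = k + 1 := by omega
        rw [this]
  have hzs : ∀ i i', i < i' → i' ≤ s → z i < z i' := by
    intro i i' h h'
    have h1 := hzmono i (by omega)
    have h2 := hzw (i+1) i' (by omega) h'
    omega
  -- component index of every vertex of V
  have hcov := fun v => aux_cover hT.1 C v
  choose jof hjof1 hjof2 using hcov
  have hjuniq : ∀ (v : V) (j : ℕ), j + 1 ≤ t →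
      (T.deleteEdges {e | e ∈ C.edges}).Reachable (C.getVert j) v → j = jof v := by
    intro v j hj hr
    exact aux_sep hT C hC hj (hjof1 v) (hr.trans (hjof2 v).symm)
  -- the interval index of every vertex
  set blk : V → ℕ := fun v => Nat.findGreatest (fun i => z i ≤ jof v) (s - 1) with hblk
  have hblk1 : ∀ v, z (blk v) ≤ jof v := by
    intro v
    have := Nat.findGreatest_spec (P := fun i => z i ≤ jof v) (m := 0) (n := s - 1)
      (by omega) (show z 0 ≤ jof v by omega)
    simpa [hblk] using this
  have hblk3 : ∀ v, blk v < s := by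
    intro v
    have : blk v ≤ s - 1 := Nat.findGreatest_le _
    omega
  have hblk2 : ∀ v, jof v < z (blk v + 1) := by
    intro v
    rcases Nat.lt_or_ge (blk v) (s-1) with hlt | hge
    · by_contra hcon
      have hgt : Nat.findGreatest (fun i => z i ≤ jof v) (s - 1) < blk v + 1 := by
        have : Nat.findGreatest (fun i => z i ≤ jof v) (s - 1) = blk v := by rw [hblk]
        omega
      exact Nat.findGreatest_is_greatest (P := fun i => z i ≤ jof v) hgt
        (by omega) (show z (blk v + 1) ≤ jof v by omega)
    · have h3 := hblk3 v
      have : blk v + 1 = s := by omega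
      rw [this]
      have := hjof1 v
      omega
  -- uniqueness of the interval index
  have hblkuniq : ∀ (v : V) (i : ℕ), i < s → z i ≤ jof v → jof v < z (i + 1) → blk v = i := by
    intro v i hi h1 h2
    rcases Nat.lt_trichotomy (blk v) i with h | h | h
    · have h3 : z (blk v + 1) ≤ z i := hzw _ _ (by omega) (by omega)
      have h4 := hblk2 v
      omega
    · exact h
    · have h5 := hblk3 v
      have h3 : z (i + 1) ≤ z (blk v) := hzw _ _ (by omega) (by omega)
      have h4 := hblk1 v
      omega
  -- conversions getD/getVert
  have hcgd : ∀ j, j + 1 ≤ t → C.support.getD j c₁ = C.getVert j := by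
    intro j hj; exact aux_getD C j (by omega) c₁
  have hbgd : ∀ i, i + 1 ≤ s → B.support.getD i b₁ = B.getVert i := by
    intro i hi; exact aux_getD B i (by omega) b₁
  -- the inComps proof for each vertex
  have hin : ∀ v, inComps T C (z (blk v)) (z (blk v + 1) - 1) v := by
    intro v
    refine ⟨jof v, hblk1 v, by have := hblk2 v; omega, ?_⟩
    rw [hcgd _ (hjof1 v)]
    exact hjof2 v
  set tv : ∀ v : V, ContrVert T C (z (blk v)) (z (blk v + 1) - 1) := fun v =>
    if h : isCore T C (z (blk v)) (z (blk v + 1) - 1) v then none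
    else some ⟨v, hin v, h⟩ with htv
  set f : V → W := fun v => (g (blk v) (hblk3 v) (tv v)).1 with hfdef
  -- key characterizations
  have hK3 : ∀ v, (f v) ∈ compSet P B (blk v) := fun v => (g (blk v) (hblk3 v) (tv v)).2
  have hK2 : ∀ v, isCore T C (z (blk v)) (z (blk v + 1) - 1) v →
      f v = B.support.getD (blk v) b₁ := by
    intro v h
    have htvv : tv v = none := dif_pos h
    show (g (blk v) (hblk3 v) (tv v)).1 = _
    rw [htvv, hgroot (blk v) (hblk3 v)]
    rfl
  have hK1 : ∀ (v : V) (h : ¬ isCore T C (z (blk v)) (z (blk v + 1) - 1) v),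
      f v = (g (blk v) (hblk3 v) (some ⟨v, hin v, h⟩)).1 := by
    intro v h
    have htvv : tv v = some ⟨v, hin v, h⟩ := dif_neg h
    show (g (blk v) (hblk3 v) (tv v)).1 = _
    rw [htvv]
  -- interval determination from inComps
  have hK5 : ∀ (v : V) (i : ℕ), i < s → inComps T C (z i) (z (i + 1) - 1) v → blk v = i := by
    intro v i hi ⟨j, hj1, hj2, hj3⟩
    have hjt : j + 1 ≤ t := by
      have : z (i+1) ≤ z s := hzw _ _ (by omega) (le_refl s)
      have := hzs i (i+1) (by omega) (by omega)
      omega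
    rw [hcgd _ hjt] at hj3
    have := hjuniq v j hjt hj3
    exact hblkuniq v i hi (by omega) (by have := hzs i (i+1) (by omega) (by omega); omega)
  -- values on the cores
  have hK6 : ∀ (i : ℕ), i < s → ∀ (j : ℕ), z i ≤ j → j + 1 ≤ z (i + 1) →
      f (C.getVert j) = B.support.getD i b₁ ∧ blk (C.getVert j) = i ∧
      isCore T C (z i) (z (i + 1) - 1) (C.getVert j) := by
    intro i hi j hj1 hj2
    have hjt : j + 1 ≤ t := by
      have : z (i+1) ≤ z s := hzw _ _ (by omega) (le_refl s)
      omega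
    have hcore : isCore T C (z i) (z (i + 1) - 1) (C.getVert j) :=
      ⟨j, hj1, by omega, (hcgd _ hjt)⟩
    have hb : blk (C.getVert j) = i := by
      refine hblkuniq _ i hi ?_ ?_ <;>
      · have := hjuniq (C.getVert j) j hjt (by rfl)
        omega
    refine ⟨?_, hb, hcore⟩
    have := hK2 (C.getVert j) (by rw [hb]; exact hcore)
    rw [this, hb]
  -- disjointness of the component sets of P
  have hdisj : ∀ (i i' : ℕ), i + 1 ≤ s → i' + 1 ≤ s → ∀ w : W,
      (P.deleteEdges {e | e ∈ B.edges}).Reachable (B.support.getD i b₁) w →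
      (P.deleteEdges {e | e ∈ B.edges}).Reachable (B.support.getD i' b₁) w → i = i' := by
    intro i i' hi hi' w h1 h2
    rw [hbgd _ hi] at h1; rw [hbgd _ hi'] at h2
    exact aux_sep hP B hB hi hi' (h1.trans h2.symm)
  -- f's value is in compSet of blk, so blk is determined by membership
  have hK8 : ∀ (v : V) (i : ℕ), i < s → f v ∈ compSet P B i → blk v = i := by
    intro v i hi hmem
    exact hdisj (blk v) i (hblk3 v) hi (f v) (hK3 v) hmem
  have hK9 : ∀ (i : ℕ) (hi : i < s) (a : V) (ha : inComps T C (z i) (z (i + 1) - 1) a)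
      (hna : ¬ isCore T C (z i) (z (i + 1) - 1) a),
      f a = (g i hi (some ⟨a, ha, hna⟩)).1 := by
    intro i hi a ha hna
    have hb : blk a = i := hK5 a i hi ha
    subst hb
    rw [hK1 a hna]
  refine ⟨f, ?_, ?_, ?_⟩
  · -- surjectivity
    intro w
    obtain ⟨i, hi, hr⟩ := aux_cover hP.1 B w
    have hw : w ∈ compSet P B i := by
      show (P.deleteEdges {e | e ∈ B.edges}).Reachable (B.support.getD i b₁) w
      rw [hbgd _ hi]; exact hr
    obtain ⟨X, hX⟩ := (hgme i (by omega)).1 ⟨w, hw⟩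
    match X, hX with
    | none, hX =>
      have hwi : w = B.support.getD i b₁ := by
        have := hgroot i (by omega)
        rw [this] at hX
        exact (congrArg Subtype.val hX).symm
      refine ⟨C.getVert (z i), ?_⟩
      have := (hK6 i (by omega) (z i) (le_refl _) (by have := hzs i (i+1) (by omega) (by omega); omega)).1
      rw [this, hwi]
    | some ⟨a, ha, hna⟩, hX =>
      refine ⟨a, ?_⟩
      have hb : blk a = i := hK5 a i (by omega) ha
      subst hb
      rw [hK1 a hna]
      have : (⟨a, hin a, hna⟩ : {v : V // inComps T C (z (blk a)) (z (blk a + 1) - 1) v ∧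
          ¬ isCore T C (z (blk a)) (z (blk a + 1) - 1) v}) = ⟨a, ha, hna⟩ := rfl
      rw [this, hX]
  · -- connected fibers
    intro w
    have hne : ∃ v, f v = w := by
      obtain ⟨i, hi, hr⟩ := aux_cover hP.1 B w
      have hw : w ∈ compSet P B i := by
        show (P.deleteEdges {e | e ∈ B.edges}).Reachable (B.support.getD i b₁) w
        rw [hbgd _ hi]; exact hr
      obtain ⟨X, hX⟩ := (hgme i (by omega)).1 ⟨w, hw⟩
      match X, hX with
      | none, hX =>
        have hwi : w = B.support.getD i b₁ := by
          have := hgroot i (by omega); rw [this] at hX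
          exact (congrArg Subtype.val hX).symm
        exact ⟨C.getVert (z i), by
          rw [(hK6 i (by omega) (z i) (le_refl _)
            (by have := hzs i (i+1) (by omega) (by omega); omega)).1, hwi]⟩
      | some ⟨a, ha, hna⟩, hX =>
        refine ⟨a, ?_⟩
        have hb : blk a = i := hK5 a i (by omega) ha
        subst hb
        rw [hK1 a hna]
        have : (⟨a, hin a, hna⟩ : {v : V // inComps T C (z (blk a)) (z (blk a + 1) - 1) v ∧
            ¬ isCore T C (z (blk a)) (z (blk a + 1) - 1) v}) = ⟨a, ha, hna⟩ := rfl
        rw [this, hX]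
    obtain ⟨v₀, hv₀⟩ := hne
    -- the unique component index of w
    have hi : blk v₀ < s := hblk3 v₀
    set i := blk v₀ with hidef
    have hw : w ∈ compSet P B i := hv₀ ▸ hK3 v₀
    -- core chain within the fiber (only meaningful when w = b_i)
    clear_value i
    clear hidef
    have hzit : z (i + 1) ≤ t := by
      have h1 : z (i + 1) ≤ z s := hzw _ _ (by omega) (le_refl s)
      omega
    have hzii : z i + 1 ≤ z (i + 1) := by
      have := hzs i (i + 1) (by omega) (by omega); omega
    set pre : Set (ContrVert T C (z i) (z (i + 1) - 1)) := (g i hi) ⁻¹' {⟨w, hw⟩} with hpre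
    set mm : ContrVert T C (z i) (z (i + 1) - 1) → V :=
      fun X => Option.elim X (C.getVert (z i)) (fun a => a.1) with hmm
    have hnonei : ∀ (hX : (none : ContrVert T C (z i) (z (i+1) - 1)) ∈ pre),
        w = B.support.getD i b₁ := by
      intro hX
      have : g i hi none = ⟨w, hw⟩ := hX
      rw [hgroot i hi] at this
      exact (congrArg Subtype.val this).symm
    have hsomei : ∀ (a : {v : V // inComps T C (z i) (z (i+1)-1) v ∧ ¬ isCore T C (z i) (z (i+1)-1) v})
        (hX : (some a) ∈ pre), f a.1 = w := by
      intro a hX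
      have h1 : g i hi (some a) = ⟨w, hw⟩ := hX
      have h2 : f a.1 = (g i hi (some ⟨a.1, a.2.1, a.2.2⟩)).1 := hK9 i hi a.1 a.2.1 a.2.2
      rw [h2]
      rw [(show (⟨a.1, a.2.1, a.2.2⟩ :
        {v : V // inComps T C (z i) (z (i+1)-1) v ∧ ¬ isCore T C (z i) (z (i+1)-1) v}) = a from rfl), h1]
    have hcoremem : ∀ (hwi : w = B.support.getD i b₁) (j : ℕ), z i ≤ j → j + 1 ≤ z (i+1) →
        f (C.getVert j) = w := by
      intro hwi j h1 h2
      rw [(hK6 i hi j h1 h2).1, ← hwi]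
    have pf : ∀ X, X ∈ pre → f (mm X) = w := by
      intro X hX
      match X with
      | none =>
        exact hcoremem (hnonei hX) (z i) (le_refl _) hzii
      | some a => exact hsomei a hX
    have pfm : ∀ X, X ∈ pre → mm X ∈ f ⁻¹' {w} := by
      intro X hX
      simp only [Set.mem_preimage, Set.mem_singleton_iff]
      exact pf X hX
    -- chain of core vertices inside the fiber
    have corechain : ∀ (hwi : w = B.support.getD i b₁) (j d : ℕ) (h1 : z i ≤ j)
        (h2 : j + d + 1 ≤ z (i+1)),
        (T.induce (f ⁻¹' {w})).Reachable ⟨C.getVert j, hcoremem hwi j h1 (by omega)⟩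
          ⟨C.getVert (j + d), hcoremem hwi (j + d) (by omega) (by omega)⟩ := by
      intro hwi j d
      induction d with
      | zero => intro h1 h2; rfl
      | succ k ih =>
        intro h1 h2
        refine (ih h1 (by omega)).trans ?_
        have hadj : T.Adj (C.getVert (j + k)) (C.getVert (j + k + 1)) := by
          refine aux_adj_getVert C ?_
          omega
        exact SimpleGraph.Adj.reachable (by
          simp only [SimpleGraph.induce, SimpleGraph.comap]
          exact hadj)
    have corereach : ∀ (hwi : w = B.support.getD i b₁) (j j' : ℕ) (h1 : z i ≤ j)
        (h2 : j + 1 ≤ z (i+1)) (h1' : z i ≤ j') (h2' : j' + 1 ≤ z (i+1)),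
        (T.induce (f ⁻¹' {w})).Reachable ⟨C.getVert j, hcoremem hwi j h1 h2⟩
          ⟨C.getVert j', hcoremem hwi j' h1' h2'⟩ := by
      intro hwi j j' h1 h2 h1' h2'
      rcases le_total j j' with h | h
      · obtain ⟨d, rfl⟩ : ∃ d, j' = j + d := ⟨j' - j, by omega⟩
        exact corechain hwi j d h1 (by omega)
      · obtain ⟨d, rfl⟩ : ∃ d, j = j' + d := ⟨j - j', by omega⟩
        exact (corechain hwi j' d h1' (by omega)).symm
    -- mapping adjacency in the contracted tree down to the fiber
    have madj : ∀ (X Y : ContrVert T C (z i) (z (i+1) - 1)) (hX : X ∈ pre) (hY : Y ∈ pre),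
        (ContrTree T C (z i) (z (i+1) - 1)).Adj X Y →
        (T.induce (f ⁻¹' {w})).Reachable ⟨mm X, pfm X hX⟩ ⟨mm Y, pfm Y hY⟩ := by
      have key : ∀ (Y : ContrVert T C (z i) (z (i+1) - 1)) (hX : none ∈ pre) (hY : Y ∈ pre),
          ContrRel T C (z i) (z (i+1) - 1) none Y →
          (T.induce (f ⁻¹' {w})).Reachable ⟨mm none, pfm none hX⟩ ⟨mm Y, pfm Y hY⟩ := by
        intro Y hX hY hrel
        match Y with
        | none => exact (show False from hrel).elim
        | some b =>
          obtain ⟨x0, hx0c, hx0adj⟩ := hrel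
          obtain ⟨j, hj1, hj2, hj3⟩ := hx0c
          rw [hcgd j (by omega)] at hj3
          subst hj3
          have hwi := hnonei hX
          have hTadj : T.Adj (C.getVert j) b.1 := (SimpleGraph.deleteEdges_adj.mp hx0adj).1
          have hx0mem : f (C.getVert j) = w := hcoremem hwi j hj1 (by omega)
          have hstep : (T.induce (f ⁻¹' {w})).Adj ⟨C.getVert j, show f (C.getVert j) = w from hx0mem⟩
              ⟨b.1, show f b.1 = w from hsomei b hY⟩ := by
            simp only [SimpleGraph.induce, SimpleGraph.comap]
            exact hTadj
          refine SimpleGraph.Reachable.trans ?_ hstep.reachable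
          exact corereach hwi (z i) j (le_refl _) hzii hj1 (by omega)
      intro X Y hX hY hadj
      obtain ⟨hne, hrel⟩ := (SimpleGraph.fromRel_adj _ X Y).mp hadj
      match X, Y with
      | none, none => exact absurd rfl hne
      | none, some b =>
        rcases hrel with hrel | hrel
        · exact key (some b) hX hY hrel
        · exact (show False from hrel).elim
      | some a, none =>
        rcases hrel with hrel | hrel
        · exact (show False from hrel).elim
        · exact (key (some a) hY hX hrel).symm
      | some a, some b =>
        have hTadj : T.Adj a.1 b.1 := by
          rcases hrel with hrel | hrel
          · exact (SimpleGraph.deleteEdges_adj.mp hrel).1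
          · exact ((SimpleGraph.deleteEdges_adj.mp hrel).1).symm
        exact SimpleGraph.Adj.reachable (by
          simp only [SimpleGraph.induce, SimpleGraph.comap]
          exact hTadj)
    -- every fiber element is represented in pre
    have hrep : ∀ (x : V) (hx : f x = w), ∃ (X : ContrVert T C (z i) (z (i+1) - 1)) (hX : X ∈ pre),
        (T.induce (f ⁻¹' {w})).Reachable ⟨x, hx⟩ ⟨mm X, pfm X hX⟩ := by
      intro x hx
      have hblkx : blk x = i := hK8 x i hi (by rw [hx]; exact hw)
      by_cases hcx : isCore T C (z i) (z (i + 1) - 1) x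
      · have hwi : w = B.support.getD i b₁ := by
          obtain ⟨j, hj1, hj2, hj3⟩ := hcx
          rw [hcgd j (by omega)] at hj3
          rw [← hx, ← hj3]
          exact (hK6 i hi j hj1 (by omega)).1
        have hXpre : (none : ContrVert T C (z i) (z (i+1) - 1)) ∈ pre := by
          show g i hi none = ⟨w, hw⟩
          rw [hgroot i hi]
          exact Subtype.ext hwi.symm
        refine ⟨none, hXpre, ?_⟩
        obtain ⟨j, hj1, hj2, hj3⟩ := hcx
        rw [hcgd j (by omega)] at hj3
        subst hj3
        exact corereach hwi j (z i) hj1 (by omega) (le_refl _) hzii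
      · have hinx : inComps T C (z i) (z (i + 1) - 1) x := hblkx ▸ hin x
        have hXpre : (some ⟨x, hinx, hcx⟩ : ContrVert T C (z i) (z (i+1) - 1)) ∈ pre := by
          show g i hi (some ⟨x, hinx, hcx⟩) = ⟨w, hw⟩
          refine Subtype.ext ?_
          rw [← hK9 i hi x hinx hcx, hx]
        exact ⟨some ⟨x, hinx, hcx⟩, hXpre, SimpleGraph.Reachable.refl _⟩
    refine aux_connected_induce ⟨v₀, hv₀⟩ ?_
    intro x hx y hy
    obtain ⟨X, hX, hrx⟩ := hrep x hx
    obtain ⟨Y, hY, hry⟩ := hrep y hy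
    refine hrx.trans (SimpleGraph.Reachable.trans ?_ hry.symm)
    have hgconn := (hgme i hi).2.1 ⟨w, hw⟩
    have hgr : ((ContrTree T C (z i) (z (i+1) - 1)).induce pre).Reachable ⟨X, hX⟩ ⟨Y, hY⟩ :=
      hgconn.preconnected _ _
    exact aux_reach_map (fun Z => (⟨mm Z.1, pfm Z.1 Z.2⟩ : ↥(f ⁻¹' {w})))
      (fun Za Zb hZ => madj Za.1 Zb.1 Za.2 Zb.2 (by
        exact hZ)) hgr
  · -- edge realization
    intro u w0 hadj
    by_cases he : s(u, w0) ∈ B.edges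
    · obtain ⟨k, hk, he'⟩ := aux_mem_edges B he
      have hk2 : k + 2 ≤ s := by omega
      have hzk1 : z (k+1) < t := by
        have h1 := hzs (k+1) s (by omega) (le_refl s)
        omega
      have hzk0 : z k < z (k+1) := hzmono k (by omega)
      have h5 : z (k+1) - 1 + 1 = z (k+1) := by omega
      have hTadj : T.Adj (C.getVert (z (k+1) - 1)) (C.getVert (z (k+1))) := by
        have := aux_adj_getVert C (j := z (k+1) - 1) (by omega)
        rwa [h5] at this
      have hfa : f (C.getVert (z (k+1) - 1)) = B.getVert k := by
        rw [(hK6 k (by omega) (z (k+1) - 1) (by omega) (by omega)).1, hbgd k (by omega)]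
      have hfb : f (C.getVert (z (k+1))) = B.getVert (k+1) := by
        have h6 : z (k+1) + 1 ≤ z (k+2) := hzs (k+1) (k+2) (by omega) (by omega)
        rw [(hK6 (k+1) (by omega) (z (k+1)) (le_refl _) h6).1, hbgd (k+1) (by omega)]
      rcases Sym2.eq_iff.mp he' with ⟨h1, h2⟩ | ⟨h1, h2⟩
      · exact ⟨_, _, hTadj, by rw [hfa, h1], by rw [hfb, h2]⟩
      · exact ⟨_, _, hTadj.symm, by rw [hfb, h1], by rw [hfa, h2]⟩
    · have hadj' : (P.deleteEdges {e | e ∈ B.edges}).Adj u w0 :=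
        SimpleGraph.deleteEdges_adj.mpr ⟨hadj, he⟩
      obtain ⟨i, hi, hr⟩ := aux_cover hP.1 B u
      have hu : u ∈ compSet P B i := by
        show (P.deleteEdges {e | e ∈ B.edges}).Reachable (B.support.getD i b₁) u
        rw [hbgd _ hi]; exact hr
      have hw0 : w0 ∈ compSet P B i := by
        show (P.deleteEdges {e | e ∈ B.edges}).Reachable (B.support.getD i b₁) w0
        exact SimpleGraph.Reachable.trans hu hadj'.reachable
      have hi' : i < s := by omega
      have hcg : (compGraph P B i).Adj ⟨u, hu⟩ ⟨w0, hw0⟩ := by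
        simp only [compGraph, SimpleGraph.induce, SimpleGraph.comap]
        exact hadj'
      obtain ⟨X, Y, hXY, hgX, hgY⟩ := (hgme i hi').2.2 hcg
      obtain ⟨hne, hrel⟩ := (SimpleGraph.fromRel_adj _ X Y).mp hXY
      have hzit : z (i + 1) ≤ t := by
        have h1 : z (i + 1) ≤ z s := hzw _ _ (by omega) (le_refl s)
        omega
      have hvnone : ∀ (hgZ : g i hi' none = (⟨u, hu⟩ : ↥(compSet P B i))),
          u = B.support.getD i b₁ := by
        intro hgZ
        rw [hgroot i hi'] at hgZ
        exact (congrArg Subtype.val hgZ).symm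
      have hvnone' : ∀ (hgZ : g i hi' none = (⟨w0, hw0⟩ : ↥(compSet P B i))),
          w0 = B.support.getD i b₁ := by
        intro hgZ
        rw [hgroot i hi'] at hgZ
        exact (congrArg Subtype.val hgZ).symm
      have hvsome : ∀ (a : {v : V // inComps T C (z i) (z (i+1)-1) v ∧ ¬ isCore T C (z i) (z (i+1)-1) v})
          (y : W) (hy : y ∈ compSet P B i) (hgZ : g i hi' (some a) = ⟨y, hy⟩), f a.1 = y := by
        intro a y hy hgZ
        have h2 : f a.1 = (g i hi' (some ⟨a.1, a.2.1, a.2.2⟩)).1 := hK9 i hi' a.1 a.2.1 a.2.2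
        rw [h2, (show (⟨a.1, a.2.1, a.2.2⟩ :
          {v : V // inComps T C (z i) (z (i+1)-1) v ∧ ¬ isCore T C (z i) (z (i+1)-1) v}) = a from rfl), hgZ]
      have hzii' : z i + 1 ≤ z (i + 1) := by
        have := hzs i (i + 1) (by omega) (by omega); omega
      have hcoreval : ∀ (x0 : V), isCore T C (z i) (z (i+1) - 1) x0 →
          f x0 = B.support.getD i b₁ := by
        intro x0 hx0
        obtain ⟨j, hj1, hj2, hj3⟩ := hx0
        rw [hcgd j (by omega)] at hj3
        rw [← hj3]
        exact (hK6 i hi' j hj1 (by omega)).1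
      match X, Y with
      | none, none => exact absurd rfl hne
      | none, some b =>
        have hrel' : ContrRel T C (z i) (z (i+1) - 1) none (some b) := by
          rcases hrel with hrel | hrel
          · exact hrel
          · exact (show False from hrel).elim
        obtain ⟨x0, hx0c, hx0adj⟩ := hrel'
        refine ⟨x0, b.1, (SimpleGraph.deleteEdges_adj.mp hx0adj).1, ?_, hvsome b w0 hw0 hgY⟩
        rw [hcoreval x0 hx0c, ← hvnone hgX]
      | some a, none =>
        have hrel' : ContrRel T C (z i) (z (i+1) - 1) none (some a) := by
          rcases hrel with hrel | hrel
          · exact (show False from hrel).elim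
          · exact hrel
        obtain ⟨x0, hx0c, hx0adj⟩ := hrel'
        refine ⟨a.1, x0, ((SimpleGraph.deleteEdges_adj.mp hx0adj).1).symm,
          hvsome a u hu hgX, ?_⟩
        rw [hcoreval x0 hx0c, ← hvnone' hgY]
      | some a, some b =>
        have hTadj : T.Adj a.1 b.1 := by
          rcases hrel with hrel | hrel
          · exact (SimpleGraph.deleteEdges_adj.mp hrel).1
          · exact ((SimpleGraph.deleteEdges_adj.mp hrel).1).symm
        exact ⟨a.1, b.1, hTadj, hvsome a u hu hgX, hvsome b w0 hw0 hgY⟩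

end Backward

section Forward
open SimpleGraph Walk

variable {V W : Type*}

lemma aux_forward (T : SimpleGraph V) (P : SimpleGraph W)
    (hT : T.IsTree) (hP : P.IsTree)
    {b₁ bₛ : W} (B : P.Walk b₁ bₛ) (hB : B.IsPath)
    (f : V → W) (hf : IsMinorEmbedding T P f) :
    ∃ (c₁ cₜ : V) (C : T.Walk c₁ cₜ), C.IsPath ∧
      ∃ z : ℕ → ℕ, z 0 = 0 ∧ z B.support.length = C.support.length ∧
        (∀ i < B.support.length, z i < z (i + 1)) ∧
        ∀ i < B.support.length,
          ∃ g : ContrVert T C (z i) (z (i + 1) - 1) → compSet P B i,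
            IsMinorEmbedding (ContrTree T C (z i) (z (i + 1) - 1)) (compGraph P B i) g ∧
            g none = compRoot P B i := by
  classical
  have hom := aux_hom hT hP hf
  obtain ⟨hsurj, hconn, hedge⟩ := hf
  set s := B.support.length with hs
  have hs1 : 1 ≤ s := by rw [hs, Walk.length_support]; omega
  set bb : ℕ → W := fun i => B.getVert i with hbb
  have hbgd : ∀ i, i + 1 ≤ s → B.support.getD i b₁ = bb i := by
    intro i hi; exact aux_getD B i (by omega) b₁
  have hbb0 : bb 0 = b₁ := Walk.getVert_zero B
  have hsl : s = B.length + 1 := by rw [hs, Walk.length_support]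
  have hbbl : bb (s-1) = bₛ := by
    rw [hbb]; simp only []
    rw [show s - 1 = B.length by omega]
    exact Walk.getVert_length B
  have bbinj : ∀ i i', i + 1 ≤ s → i' + 1 ≤ s → bb i = bb i' → i = i' := by
    intro i i' hi hi' h
    exact aux_getVert_inj B hB (by omega) (by omega) h
  have bbadj : ∀ k, k + 2 ≤ s → P.Adj (bb k) (bb (k+1)) := by
    intro k hk; exact aux_adj_getVert B (by omega)
  have bedge : ∀ k, k + 2 ≤ s → s(bb k, bb (k+1)) ∈ B.edges := by
    intro k hk; exact aux_edge_mem B (by omega)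
  have bedge' : ∀ e ∈ B.edges, ∃ k, k + 2 ≤ s ∧ e = s(bb k, bb (k+1)) := by
    intro e he
    obtain ⟨k, hk, hke⟩ := aux_mem_edges B he
    exact ⟨k, by omega, hke⟩
  -- realizers of backbone edges
  have hreal : ∀ k, k + 2 ≤ s → ∃ a b, T.Adj a b ∧ f a = bb k ∧ f b = bb (k+1) :=
    fun k hk => hedge (bbadj k hk)
  choose ua va hWadj hfua hfva using hreal
  -- fiber-internal edges avoid realizer edges
  have hDfib : ∀ (k : ℕ) (hk : k + 2 ≤ s) (m : ℕ), m + 1 ≤ s →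
      ∀ a b : V, s(a,b) = s(ua k hk, va k hk) → ¬(f a = bb m ∧ f b = bb m) := by
    intro k hk m hm a b hab ⟨ha, hb⟩
    rcases Sym2.eq_iff.mp hab with ⟨rfl, rfl⟩ | ⟨rfl, rfl⟩
    · have h1 : bb m = bb k := ha.symm.trans (hfua k hk)
      have h2 : bb m = bb (k+1) := hb.symm.trans (hfva k hk)
      have := bbinj m k hm (by omega) h1
      have := bbinj m (k+1) hm (by omega) h2
      omega
    · have h1 : bb m = bb (k+1) := ha.symm.trans (hfva k hk)
      have h2 : bb m = bb k := hb.symm.trans (hfua k hk)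
      have := bbinj m k hm (by omega) h2
      have := bbinj m (k+1) hm (by omega) h1
      omega
  -- uniqueness of realizers
  have hUR : ∀ (k : ℕ) (hk : k + 2 ≤ s) (a b : V), T.Adj a b → f a = bb k → f b = bb (k+1) →
      a = ua k hk ∧ b = va k hk := by
    intro k hk a b hab hfa hfb
    by_cases hsym : s(a, b) = s(ua k hk, va k hk)
    · rcases Sym2.eq_iff.mp hsym with ⟨h1, h2⟩ | ⟨h1, h2⟩
      · exact ⟨h1, h2⟩
      · exfalso
        have : bb k = bb (k+1) := by
          rw [← hfa, h1, hfva k hk]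
        have := bbinj k (k+1) (by omega) (by omega) this
        omega
    · exfalso
      have r1 : (T.deleteEdges {s(ua k hk, va k hk)}).Reachable (ua k hk) a :=
        aux_fibreach hconn (bb k) _ (hDfib k hk k (by omega)) _ _ (hfua k hk) hfa
      have r2 : (T.deleteEdges {s(ua k hk, va k hk)}).Reachable a b :=
        (SimpleGraph.deleteEdges_adj.mpr ⟨hab, by simpa using hsym⟩).reachable
      have r3 : (T.deleteEdges {s(ua k hk, va k hk)}).Reachable b (va k hk) :=
        aux_fibreach hconn (bb (k+1)) _ (hDfib k hk (k+1) (by omega)) _ _ hfb (hfva k hk)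
      exact aux_bridge hT (hWadj k hk) ((r1.trans r2).trans r3)
  -- chains of fibers avoiding an edge
  have hchain : ∀ (lo hi : ℕ), hi + 1 ≤ s → ∀ (D : Sym2 V),
      (∀ m, lo ≤ m → m ≤ hi → ∀ a b : V, s(a,b) = D → ¬(f a = bb m ∧ f b = bb m)) →
      (∀ (m : ℕ) (hm : m + 2 ≤ s), lo ≤ m → m + 1 ≤ hi → s(ua m hm, va m hm) ≠ D) →
      ∀ (d k : ℕ), lo ≤ k → k + d ≤ hi → ∀ x y, f x = bb k → f y = bb (k + d) →
        (T.deleteEdges {D}).Reachable x y := by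
    intro lo hi hhi D hD1 hD2 d
    induction d with
    | zero =>
      intro k h1 h2 x y hx hy
      exact aux_fibreach hconn (bb k) D (hD1 k h1 (by omega)) x y hx hy
    | succ r ih =>
      intro k h1 h2 x y hx hy
      have hm : k + r + 2 ≤ s := by omega
      have r1 : (T.deleteEdges {D}).Reachable x (ua (k+r) hm) :=
        ih k h1 (by omega) x _ hx (hfua _ hm)
      have r2 : (T.deleteEdges {D}).Reachable (ua (k+r) hm) (va (k+r) hm) :=
        (SimpleGraph.deleteEdges_adj.mpr ⟨hWadj _ hm,
          by simpa using hD2 (k+r) hm (by omega) (by omega)⟩).reachable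
      have r3 : (T.deleteEdges {D}).Reachable (va (k+r) hm) y := by
        refine aux_fibreach hconn (bb (k+r+1)) D (hD1 (k+r+1) (by omega) (by omega)) _ y
          (hfva _ hm) ?_
        rw [show k + r + 1 = k + (r+1) by omega]
        exact hy
      exact (r1.trans r2).trans r3
  -- the path C
  obtain ⟨x1, hx1⟩ := hsurj b₁
  obtain ⟨xT, hxT⟩ := hsurj bₛ
  obtain ⟨w0⟩ := hT.1 x1 xT
  set C := w0.bypass with hCdef
  have hC : C.IsPath := w0.bypass_isPath
  set t := C.support.length with ht
  have ht1 : 1 ≤ t := by rw [ht, Walk.length_support]; omega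
  have htl : t = C.length + 1 := by rw [ht, Walk.length_support]
  have hcc0 : C.getVert 0 = x1 := Walk.getVert_zero C
  have hccl : C.getVert (t-1) = xT := by
    rw [show t - 1 = C.length by omega]
    exact Walk.getVert_length C
  have hcgd : ∀ j, j + 1 ≤ t → C.support.getD j x1 = C.getVert j := by
    intro j hj; exact aux_getD C j (by omega) x1
  -- every realizer edge lies on C
  have hcross : ∀ (k : ℕ) (hk : k + 2 ≤ s), s(ua k hk, va k hk) ∈ C.edges := by
    intro k hk
    by_contra hnc
    have h1 : (T.deleteEdges {s(ua k hk, va k hk)}).Reachable x1 xT := by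
      refine aux_reach_del C ?_
      intro e he hemem
      exact hnc (by rwa [show e = s(ua k hk, va k hk) from hemem] at he)
    have h2 : (T.deleteEdges {s(ua k hk, va k hk)}).Reachable x1 (ua k hk) := by
      refine hchain 0 k (by omega) _ ?_ ?_ k 0 (by omega) (by omega) x1 _ (by rw [hbb0]; exact hx1)
        (by rw [show 0 + k = k by omega]; exact hfua k hk)
      · intro m hm0 hmk a b hab
        exact hDfib k hk m (by omega) a b hab
      · intro m hm hm0 hmk heq
        rcases Sym2.eq_iff.mp heq with ⟨h3, h4⟩ | ⟨h3, h4⟩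
        · have : bb m = bb k := by rw [← hfua m hm, h3, hfua k hk]
          have := bbinj m k (by omega) (by omega) this
          omega
        · have : bb m = bb (k+1) := by rw [← hfua m hm, h3, hfva k hk]
          have := bbinj m (k+1) (by omega) (by omega) this
          omega
    have h3 : (T.deleteEdges {s(ua k hk, va k hk)}).Reachable (va k hk) xT := by
      refine hchain (k+1) (s-1) (by omega) _ ?_ ?_ (s-1-(k+1)) (k+1) (by omega) (by omega)
        _ xT (hfva k hk) ?_
      · intro m hm1 hms a b hab ⟨ha, hb⟩
        rcases Sym2.eq_iff.mp hab with ⟨rfl, rfl⟩ | ⟨rfl, rfl⟩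
        · have : bb m = bb k := by rw [← ha, hfua k hk]
          have := bbinj m k (by omega) (by omega) this
          omega
        · have : bb m = bb k := by rw [← hb, hfua k hk]
          have := bbinj m k (by omega) (by omega) this
          omega
      · intro m hm hm1 hms heq
        rcases Sym2.eq_iff.mp heq with ⟨h3, h4⟩ | ⟨h3, h4⟩
        · have : bb m = bb k := by rw [← hfua m hm, h3, hfua k hk]
          have := bbinj m k (by omega) (by omega) this
          omega
        · have : bb (m+1) = bb k := by rw [← hfva m hm, h4, hfua k hk]
          have := bbinj (m+1) k (by omega) (by omega) this
          omega
      · rw [show k + 1 + (s - 1 - (k+1)) = s - 1 by omega, hbbl]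
        exact hxT
    exact aux_bridge hT (hWadj k hk) (h2.symm.trans (h1.trans h3.symm))
  -- the index function along C
  set iot : ℕ → ℕ := fun j => Nat.rec 0
    (fun j' acc => if f (C.getVert (j'+1)) = bb acc then acc else acc + 1) j with hiotdef
  have hiot0 : iot 0 = 0 := rfl
  have hiotsucc : ∀ j, iot (j+1) =
      if f (C.getVert (j+1)) = bb (iot j) then iot j else iot j + 1 := fun j => rfl
  have hiotstep : ∀ j, iot j ≤ iot (j+1) ∧ iot (j+1) ≤ iot j + 1 := by
    intro j
    rw [hiotsucc]
    split <;> omega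
  have hiotmono : ∀ j j', j ≤ j' → iot j ≤ iot j' := by
    intro j j' h
    induction j' with
    | zero =>
      have : j = 0 := by omega
      rw [this]
    | succ r ih =>
      rcases Nat.lt_or_ge j (r+1) with hlt | hge
      · have h1 := ih (by omega)
        have h2 := hiotstep r
        omega
      · have : j = r + 1 := by omega
        rw [this]
  have hINV : ∀ j, j + 1 ≤ t → iot j + 1 ≤ s ∧ f (C.getVert j) = bb (iot j) := by
    intro j
    induction j with
    | zero =>
      intro _
      refine ⟨by omega, ?_⟩
      rw [hiot0, hbb0, hcc0, hx1]
    | succ r ih =>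
      intro hr1
      obtain ⟨ih1, ih2⟩ := ih (by omega)
      have hadjr : T.Adj (C.getVert r) (C.getVert (r+1)) := aux_adj_getVert C (by omega)
      rcases hom _ _ hadjr with heq | hPadj
      · have hif : f (C.getVert (r+1)) = bb (iot r) := heq.symm.trans ih2
        rw [hiotsucc, if_pos hif]
        exact ⟨ih1, hif⟩
      · by_cases hBe : s(f (C.getVert r), f (C.getVert (r+1))) ∈ B.edges
        · obtain ⟨k, hk, hke⟩ := bedge' _ hBe
          rcases Sym2.eq_iff.mp hke with ⟨h1, h2⟩ | ⟨h1, h2⟩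
          · -- forward crossing
            have hkio : k = iot r := bbinj k (iot r) (by omega) (by omega) (h1.symm.trans ih2)
            have hne : f (C.getVert (r+1)) ≠ bb (iot r) := by
              rw [h2, ← hkio]
              intro hcon
              have := bbinj (k+1) k (by omega) (by omega) hcon
              omega
            rw [hiotsucc, if_neg hne]
            exact ⟨by omega, by rw [h2, hkio]⟩
          · -- backward crossing: contradiction
            exfalso
            have hur := hUR k hk (C.getVert (r+1)) (C.getVert r) hadjr.symm h2 h1
            -- prefix of C avoids the edge at position r
            obtain ⟨q, hq⟩ := aux_prefix C hC (j := r) (by omega)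
            have hpr : (T.deleteEdges {s(ua k hk, va k hk)}).Reachable x1 (C.getVert r) := by
              refine aux_reach_del q ?_
              intro e he hemem
              have : e = s(ua k hk, va k hk) := hemem
              rw [← hur.1, ← hur.2] at this
              rw [this] at he
              rw [Sym2.eq_swap] at he
              exact hq he
            have h2' : (T.deleteEdges {s(ua k hk, va k hk)}).Reachable x1 (ua k hk) := by
              refine hchain 0 k (by omega) _ ?_ ?_ k 0 (by omega) (by omega) x1 _
                (by rw [hbb0]; exact hx1)
                (by rw [show 0 + k = k by omega]; exact hfua k hk)
              · intro m hm0 hmk a b hab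
                exact hDfib k hk m (by omega) a b hab
              · intro m hm hm0 hmk heq
                rcases Sym2.eq_iff.mp heq with ⟨h3, h4⟩ | ⟨h3, h4⟩
                · have : bb m = bb k := by rw [← hfua m hm, h3, hfua k hk]
                  have := bbinj m k (by omega) (by omega) this
                  omega
                · have : bb m = bb (k+1) := by rw [← hfua m hm, h3, hfva k hk]
                  have := bbinj m (k+1) (by omega) (by omega) this
                  omega
            have : (T.deleteEdges {s(ua k hk, va k hk)}).Reachable (ua k hk) (va k hk) := by
              refine h2'.symm.trans (hpr.trans ?_)
              rw [hur.2]
            exact aux_bridge hT (hWadj k hk) this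
        · -- stepping off the backbone: contradiction
          exfalso
          set D := s(C.getVert r, C.getVert (r+1)) with hDdef
          -- suffix of C from position r+1 avoids D
          obtain ⟨q, hq⟩ := aux_suffix C hC (j := r) (by omega)
          have hsuf : (T.deleteEdges {D}).Reachable (C.getVert (r+1)) xT := by
            have hq' : ∀ e ∈ q.edges, e ∉ ({D} : Set (Sym2 V)) := by
              intro e he hemem
              have : e = D := hemem
              rw [this] at he
              exact hq he
            exact aux_reach_del q hq'
          -- chain from (C.getVert r) to xT avoiding D
          have hch : (T.deleteEdges {D}).Reachable (C.getVert r) xT := by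
            refine hchain (iot r) (s-1) (by omega) D ?_ ?_ (s - 1 - iot r) (iot r)
              (by omega) (by omega) _ xT ih2 ?_
            · intro m hm1 hms a b hab ⟨ha, hb⟩
              rcases Sym2.eq_iff.mp hab with ⟨rfl, rfl⟩ | ⟨rfl, rfl⟩
              · exact hPadj.ne (ha.trans hb.symm)
              · exact hPadj.ne (hb.trans ha.symm)
            · intro m hm hm1 hms heq
              rcases Sym2.eq_iff.mp heq with ⟨h3, h4⟩ | ⟨h3, h4⟩
              · refine hBe ?_
                have e1 : f (C.getVert r) = bb m := by rw [← h3, hfua m hm]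
                have e2 : f (C.getVert (r+1)) = bb (m+1) := by rw [← h4, hfva m hm]
                rw [e1, e2]
                exact bedge m hm
              · refine hBe ?_
                have e1 : f (C.getVert r) = bb (m+1) := by rw [← h4, hfva m hm]
                have e2 : f (C.getVert (r+1)) = bb m := by rw [← h3, hfua m hm]
                rw [e1, e2, Sym2.eq_swap]
                exact bedge m hm
            · rw [show iot r + (s - 1 - iot r) = s - 1 by omega, hbbl]
              exact hxT
          have : (T.deleteEdges {D}).Reachable (C.getVert r) (C.getVert (r+1)) :=
            hch.trans hsuf.symm
          exact aux_bridge hT hadjr this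
  have hiotlast : iot (t-1) = s - 1 := by
    have h1 := hINV (t-1) (by omega)
    have h2 : f (C.getVert (t-1)) = bb (s-1) := by rw [hccl, hbbl]; exact hxT
    have := bbinj (iot (t-1)) (s-1) (by omega) (by omega) (h1.2.symm.trans h2)
    omega
  have hniv : ∀ (d lo i : ℕ), iot lo ≤ i → i ≤ iot (lo + d) →
      ∃ j', lo ≤ j' ∧ j' ≤ lo + d ∧ iot j' = i := by
    intro d
    induction d with
    | zero =>
      intro lo i h1 h2
      rw [Nat.add_zero] at h2
      exact ⟨lo, le_refl _, by omega, by omega⟩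
    | succ r ih =>
      intro lo i h1 h2
      by_cases hle : i ≤ iot (lo + r)
      · obtain ⟨j', hj1, hj2, hj3⟩ := ih lo i h1 hle
        exact ⟨j', hj1, by omega, hj3⟩
      · have hst := hiotstep (lo + r)
        refine ⟨lo + r + 1, by omega, by omega, ?_⟩
        have : lo + (r + 1) = lo + r + 1 := by omega
        rw [this] at h2
        omega
  have hEX : ∀ i, i + 1 ≤ s → ∃ j, j + 1 ≤ t ∧ iot j = i := by
    intro i hi
    obtain ⟨j', h1, h2, h3⟩ := hniv (t-1) 0 i (by rw [hiot0]; omega)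
      (by rw [show 0 + (t-1) = t - 1 by omega, hiotlast]; omega)
    exact ⟨j', by omega, h3⟩
  set z : ℕ → ℕ := fun i => if h : i + 1 ≤ s then Nat.find (hEX i h) else t + i - s with hzdef
  have hzspec : ∀ i (hi : i + 1 ≤ s), z i + 1 ≤ t ∧ iot (z i) = i := by
    intro i hi
    have : z i = Nat.find (hEX i hi) := by rw [hzdef]; simp only [dif_pos hi]
    rw [this]
    exact Nat.find_spec (hEX i hi)
  have hzmin : ∀ i (hi : i + 1 ≤ s) (j : ℕ), j + 1 ≤ t → iot j = i → z i ≤ j := by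
    intro i hi j h1 h2
    have : z i = Nat.find (hEX i hi) := by rw [hzdef]; simp only [dif_pos hi]
    rw [this]
    exact Nat.find_min' _ ⟨h1, h2⟩
  have hz0 : z 0 = 0 := by
    have := hzmin 0 (by omega) 0 (by omega) hiot0
    omega
  have hzlen : z s = t := by
    rw [hzdef]; simp only [dif_neg (show ¬ (s + 1 ≤ s) by omega)]
    omega
  have hzmono : ∀ i, i + 1 ≤ s → z i < z (i+1) := by
    intro i hi
    by_cases h2 : i + 2 ≤ s
    · by_contra hcon
      have hm := hiotmono (z (i+1)) (z i) (by omega)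
      have e1 := (hzspec i (by omega)).2
      have e2 := (hzspec (i+1) h2).2
      omega
    · have : i + 1 = s := by omega
      rw [this, hzlen]
      have := (hzspec i hi).1
      omega
  have hzw : ∀ i i', i ≤ i' → i' ≤ s → z i ≤ z i' := by
    intro i i' h h'
    induction i' with
    | zero =>
      have : i = 0 := by omega
      rw [this]
    | succ k ih =>
      rcases Nat.lt_or_ge i (k+1) with hlt | hge
      · have h1 : z i ≤ z k := ih (by omega) (by omega)
        have h2 := hzmono k (by omega)
        omega
      · have : i = k + 1 := by omega
        rw [this]
  have hblock : ∀ j, j + 1 ≤ t → ∀ i, i + 1 ≤ s → (iot j = i ↔ (z i ≤ j ∧ j + 1 ≤ z (i+1))) := by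
    intro j hj i hi
    constructor
    · intro hij
      refine ⟨hzmin i hi j hj hij, ?_⟩
      by_cases h2 : i + 2 ≤ s
      · by_contra hcon
        have hm := hiotmono (z (i+1)) j (by omega)
        have e2 := (hzspec (i+1) h2).2
        omega
      · have : i + 1 = s := by omega
        rw [this, hzlen]
        omega
    · rintro ⟨h1, h2⟩
      have hge : i ≤ iot j := by
        have hm := hiotmono (z i) j h1
        have := (hzspec i hi).2
        omega
      by_contra hne'
      have hgt : i + 1 ≤ iot j := by omega
      have hbound : iot j + 1 ≤ s := (hINV j hj).1
      obtain ⟨j', hj1, hj2, hj3⟩ := hniv (j - z i) (z i) (i+1)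
        (by rw [(hzspec i hi).2]; omega)
        (by rw [show z i + (j - z i) = j by omega]; omega)
      have := hzmin (i+1) (by omega) j' (by omega) hj3
      omega
  -- mapping forest reachability to component reachability
  have hKL : ∀ x y, (T.deleteEdges {e | e ∈ C.edges}).Reachable x y →
      (P.deleteEdges {e | e ∈ B.edges}).Reachable (f x) (f y) := by
    intro x y h
    refine aux_reach_map f ?_ h
    intro a b hab
    have hTab := (SimpleGraph.deleteEdges_adj.mp hab).1
    have hnC : ¬ s(a,b) ∈ {e | e ∈ C.edges} := (SimpleGraph.deleteEdges_adj.mp hab).2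
    rcases hom a b hTab with heq | hPadj
    · rw [heq]
    · by_cases hBe : s(f a, f b) ∈ B.edges
      · exfalso
        obtain ⟨k, hk, hke⟩ := bedge' _ hBe
        rcases Sym2.eq_iff.mp hke with ⟨h1, h2⟩ | ⟨h1, h2⟩
        · have hur := hUR k hk a b hTab h1 h2
          refine hnC ?_
          show s(a, b) ∈ C.edges
          rw [hur.1, hur.2]
          exact hcross k hk
        · have hur := hUR k hk b a hTab.symm h2 h1
          refine hnC ?_
          show s(a, b) ∈ C.edges
          rw [hur.1, hur.2, Sym2.eq_swap]
          exact hcross k hk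
      · exact (SimpleGraph.deleteEdges_adj.mpr ⟨hPadj, hBe⟩).reachable
  have hval : ∀ j, j + 1 ≤ t → f (C.getVert j) = bb (iot j) := fun j hj => (hINV j hj).2
  have hdisjP : ∀ m m', m + 1 ≤ s → m' + 1 ≤ s → ∀ y : W,
      (P.deleteEdges {e | e ∈ B.edges}).Reachable (bb m) y →
      (P.deleteEdges {e | e ∈ B.edges}).Reachable (bb m') y → m = m' := by
    intro m m' hm hm' y h1 h2
    exact aux_sep hP B hB hm hm' (h1.trans h2.symm)
  have hmemC : ∀ m, m + 1 ≤ s → ∀ y : W,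
      ((P.deleteEdges {e | e ∈ B.edges}).Reachable (bb m) y ↔ y ∈ compSet P B m) := by
    intro m hm y
    constructor
    · intro h
      show (P.deleteEdges {e | e ∈ B.edges}).Reachable (B.support.getD m b₁) y
      rw [hbgd m hm]; exact h
    · intro h
      have h' : (P.deleteEdges {e | e ∈ B.edges}).Reachable (B.support.getD m b₁) y := h
      rwa [hbgd m hm] at h'
  have hFS1 : ∀ m, m + 1 ≤ s → ∀ v, inComps T C (z m) (z (m+1) - 1) v →
      f v ∈ compSet P B m := by
    intro m hm v ⟨j, hj1, hj2, hj3⟩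
    have hzmt : z (m+1) ≤ t := by
      have := hzw (m+1) s (by omega) (le_refl s); omega
    have hjt : j + 1 ≤ t := by
      have := hzmono m hm; omega
    rw [hcgd j hjt] at hj3
    have hr := hKL _ _ hj3
    have hij : iot j = m := (hblock j hjt m hm).mpr ⟨hj1, by have := hzmono m hm; omega⟩
    rw [hval j hjt, hij] at hr
    exact (hmemC m hm (f v)).mp hr
  have hFS2 : ∀ m, m + 1 ≤ s → ∀ v, f v ∈ compSet P B m →
      inComps T C (z m) (z (m+1) - 1) v := by
    intro m hm v hmem
    obtain ⟨j, hjt, hr⟩ := aux_cover hT.1 C v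
    have h1 : (P.deleteEdges {e | e ∈ B.edges}).Reachable (bb (iot j)) (f v) := by
      have := hKL _ _ hr
      rwa [hval j hjt] at this
    have hiotb : iot j + 1 ≤ s := (hINV j hjt).1
    have him : iot j = m := hdisjP (iot j) m hiotb hm (f v) h1 ((hmemC m hm (f v)).mpr hmem)
    have hbl := (hblock j hjt m hm).mp him
    exact ⟨j, hbl.1, by omega, by rw [hcgd j hjt]; exact hr⟩
  have hFS3 : ∀ m, m + 1 ≤ s → ∀ x, isCore T C (z m) (z (m+1) - 1) x → f x = bb m := by
    intro m hm x ⟨j, hj1, hj2, hj3⟩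
    have hjt : j + 1 ≤ t := by
      have h1 := hzw (m+1) s (by omega) (le_refl s)
      have := hzmono m hm; omega
    rw [hcgd j hjt] at hj3
    rw [← hj3, hval j hjt, (hblock j hjt m hm).mpr ⟨hj1, by have := hzmono m hm; omega⟩]
  have hFS4 : ∀ m, m + 1 ≤ s → ∀ x, f x ∈ compSet P B m → x ∈ C.support →
      isCore T C (z m) (z (m+1) - 1) x := by
    intro m hm x hmem hxs
    obtain ⟨j, hjt, hjx⟩ := aux_mem_support C hxs
    have hfx : f x = bb (iot j) := by rw [← hjx]; exact hval j hjt
    have him : iot j = m := by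
      refine hdisjP (iot j) m (hINV j hjt).1 hm (f x) ?_ ((hmemC m hm (f x)).mpr hmem)
      rw [hfx]
    have hbl := (hblock j hjt m hm).mp him
    exact ⟨j, hbl.1, by omega, by rw [hcgd j hjt]; exact hjx⟩
  have hCsupedge : ∀ a b : V, s(a,b) ∈ C.edges → a ∈ C.support ∧ b ∈ C.support := fun a b h =>
    ⟨Walk.fst_mem_support_of_mem_edges C h, Walk.snd_mem_support_of_mem_edges C h⟩
  -- assemble
  refine ⟨x1, xT, C, hC, z, hz0, hzlen, fun i hi => hzmono i hi, ?_⟩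
  intro i his
  have hi : i + 1 ≤ s := his
  have hzit : z (i+1) ≤ t := by
    have := hzw (i+1) s (by omega) (le_refl s); omega
  have hzii : z i + 1 ≤ z (i+1) := hzmono i hi
  have hrootval : (compRoot P B i).1 = bb i := hbgd i hi
  set g : ContrVert T C (z i) (z (i + 1) - 1) → ↥(compSet P B i) := fun X =>
    match X with
    | none => compRoot P B i
    | some a => ⟨f a.1, hFS1 i hi a.1 a.2.1⟩ with hgdef
  have hcoreval : ∀ j, z i ≤ j → j + 1 ≤ z (i+1) → f (C.getVert j) = bb i := by
    intro j h1 h2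
    have hjt : j + 1 ≤ t := by omega
    rw [hval j hjt, (hblock j hjt i hi).mpr ⟨h1, h2⟩]
  have hgsurj : Function.Surjective g := by
    rintro ⟨w', hw'⟩
    obtain ⟨v, hv⟩ := hsurj w'
    have hvin : inComps T C (z i) (z (i+1) - 1) v := hFS2 i hi v (by rw [hv]; exact hw')
    by_cases hcore : isCore T C (z i) (z (i+1) - 1) v
    · have hwb : w' = bb i := by rw [← hv]; exact hFS3 i hi v hcore
      exact ⟨none, Subtype.ext (hrootval.trans hwb.symm)⟩
    · exact ⟨some ⟨v, hvin, hcore⟩, Subtype.ext hv⟩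
  refine ⟨g, ⟨hgsurj, ?_, ?_⟩, rfl⟩
  · -- connected preimages
    rintro ⟨w', hw'⟩
    set mmup : V → ContrVert T C (z i) (z (i + 1) - 1) := fun a =>
      if h1 : isCore T C (z i) (z (i+1) - 1) a then none
      else if h2 : inComps T C (z i) (z (i+1) - 1) a then some ⟨a, h2, h1⟩ else none with hmmup
    have pfup : ∀ a, a ∈ f ⁻¹' {w'} →
        mmup a ∈ g ⁻¹' {(⟨w', hw'⟩ : ↥(compSet P B i))} := by
      intro a ha
      have hfa : f a = w' := ha
      have hain : inComps T C (z i) (z (i+1) - 1) a := hFS2 i hi a (by rw [hfa]; exact hw')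
      simp only [Set.mem_preimage, Set.mem_singleton_iff]
      by_cases h1 : isCore T C (z i) (z (i+1) - 1) a
      · have hwb : w' = bb i := by rw [← hfa]; exact hFS3 i hi a h1
        rw [(show mmup a = none by rw [hmmup]; exact dif_pos h1)]
        exact Subtype.ext (hrootval.trans hwb.symm)
      · rw [(show mmup a = some ⟨a, hain, h1⟩ by
          rw [hmmup]; exact (dif_neg h1).trans (dif_pos hain))]
        exact Subtype.ext hfa
    have hadjmap : ∀ (aa bb' : ↥(f ⁻¹' {w'})), (T.induce (f ⁻¹' {w'})).Adj aa bb' →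
        ((ContrTree T C (z i) (z (i+1) - 1)).induce (g ⁻¹' {(⟨w', hw'⟩ : ↥(compSet P B i))})).Reachable
          ⟨mmup aa.1, pfup aa.1 aa.2⟩ ⟨mmup bb'.1, pfup bb'.1 bb'.2⟩ := by
      rintro ⟨a, ha⟩ ⟨b, hb⟩ hadj
      have hTab : T.Adj a b := hadj
      have hfa : f a = w' := ha
      have hfb : f b = w' := hb
      by_cases h1 : isCore T C (z i) (z (i+1) - 1) a <;>
        by_cases h2 : isCore T C (z i) (z (i+1) - 1) b
      · have e1 : mmup a = none := by rw [hmmup]; exact dif_pos h1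
        have e2 : mmup b = none := by rw [hmmup]; exact dif_pos h2
        have : (⟨mmup a, pfup a ha⟩ :
            ↥(g ⁻¹' {(⟨w', hw'⟩ : ↥(compSet P B i))})) = ⟨mmup b, pfup b hb⟩ :=
          Subtype.ext (e1.trans e2.symm)
        rw [this]
      · have hbin : inComps T C (z i) (z (i+1) - 1) b := hFS2 i hi b (by rw [hfb]; exact hw')
        have e1 : mmup a = none := by rw [hmmup]; exact dif_pos h1
        have e2 : mmup b = some ⟨b, hbin, h2⟩ := by rw [hmmup]; exact (dif_neg h2).trans (dif_pos hbin)
        have hnCe : s(a, b) ∉ C.edges := by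
          intro hmem
          exact h2 (hFS4 i hi b (by rw [hfb]; exact hw') (hCsupedge a b hmem).2)
        have hfadj : (forestOf T C).Adj a b :=
          SimpleGraph.deleteEdges_adj.mpr ⟨hTab, hnCe⟩
        have hadj2 : (ContrTree T C (z i) (z (i+1) - 1)).Adj none (some ⟨b, hbin, h2⟩) :=
          (SimpleGraph.fromRel_adj _ _ _).mpr
            ⟨fun h => (nomatch h), Or.inl ⟨a, h1, hfadj⟩⟩
        have : ((ContrTree T C (z i) (z (i+1) - 1)).induce
            (g ⁻¹' {(⟨w', hw'⟩ : ↥(compSet P B i))})).Adj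
            ⟨mmup a, pfup a ha⟩ ⟨mmup b, pfup b hb⟩ := by
          show (ContrTree T C (z i) (z (i+1) - 1)).Adj (mmup a) (mmup b)
          rw [e1, e2]
          exact hadj2
        exact this.reachable
      · have hain : inComps T C (z i) (z (i+1) - 1) a := hFS2 i hi a (by rw [hfa]; exact hw')
        have e1 : mmup a = some ⟨a, hain, h1⟩ := by rw [hmmup]; exact (dif_neg h1).trans (dif_pos hain)
        have e2 : mmup b = none := by rw [hmmup]; exact dif_pos h2
        have hnCe : s(a, b) ∉ C.edges := by
          intro hmem
          exact h1 (hFS4 i hi a (by rw [hfa]; exact hw') (hCsupedge a b hmem).1)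
        have hfadj : (forestOf T C).Adj a b :=
          SimpleGraph.deleteEdges_adj.mpr ⟨hTab, hnCe⟩
        have hadj2 : (ContrTree T C (z i) (z (i+1) - 1)).Adj (some ⟨a, hain, h1⟩) none :=
          (SimpleGraph.fromRel_adj _ _ _).mpr
            ⟨fun h => (nomatch h), Or.inr ⟨b, h2, hfadj.symm⟩⟩
        have : ((ContrTree T C (z i) (z (i+1) - 1)).induce
            (g ⁻¹' {(⟨w', hw'⟩ : ↥(compSet P B i))})).Adj
            ⟨mmup a, pfup a ha⟩ ⟨mmup b, pfup b hb⟩ := by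
          show (ContrTree T C (z i) (z (i+1) - 1)).Adj (mmup a) (mmup b)
          rw [e1, e2]
          exact hadj2
        exact this.reachable
      · have hain : inComps T C (z i) (z (i+1) - 1) a := hFS2 i hi a (by rw [hfa]; exact hw')
        have hbin : inComps T C (z i) (z (i+1) - 1) b := hFS2 i hi b (by rw [hfb]; exact hw')
        have e1 : mmup a = some ⟨a, hain, h1⟩ := by rw [hmmup]; exact (dif_neg h1).trans (dif_pos hain)
        have e2 : mmup b = some ⟨b, hbin, h2⟩ := by rw [hmmup]; exact (dif_neg h2).trans (dif_pos hbin)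
        have hnCe : s(a, b) ∉ C.edges := by
          intro hmem
          exact h1 (hFS4 i hi a (by rw [hfa]; exact hw') (hCsupedge a b hmem).1)
        have hfadj : (forestOf T C).Adj a b :=
          SimpleGraph.deleteEdges_adj.mpr ⟨hTab, hnCe⟩
        have hadj2 : (ContrTree T C (z i) (z (i+1) - 1)).Adj (some ⟨a, hain, h1⟩)
            (some ⟨b, hbin, h2⟩) :=
          (SimpleGraph.fromRel_adj _ _ _).mpr
            ⟨fun hcon => hTab.ne (congrArg Subtype.val (Option.some.inj hcon)),
              Or.inl hfadj⟩
        have : ((ContrTree T C (z i) (z (i+1) - 1)).induce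
            (g ⁻¹' {(⟨w', hw'⟩ : ↥(compSet P B i))})).Adj
            ⟨mmup a, pfup a ha⟩ ⟨mmup b, pfup b hb⟩ := by
          show (ContrTree T C (z i) (z (i+1) - 1)).Adj (mmup a) (mmup b)
          rw [e1, e2]
          exact hadj2
        exact this.reachable
    have hrepr : ∀ X, X ∈ g ⁻¹' {(⟨w', hw'⟩ : ↥(compSet P B i))} →
        ∃ (a : V) (ha : a ∈ f ⁻¹' {w'}), mmup a = X := by
      intro X hX
      have hX' : g X = ⟨w', hw'⟩ := hX
      match X with
      | none =>
        have hwb : w' = bb i := by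
          have h9 := congrArg Subtype.val hX'
          exact h9.symm.trans hrootval
        have hcore : isCore T C (z i) (z (i+1) - 1) (C.getVert (z i)) :=
          ⟨z i, le_refl _, by omega, hcgd (z i) (by omega)⟩
        refine ⟨C.getVert (z i), ?_, by rw [hmmup]; exact dif_pos hcore⟩
        show f (C.getVert (z i)) = w'
        rw [hcoreval (z i) (le_refl _) hzii, hwb]
      | some a =>
        have hfa : f a.1 = w' := congrArg Subtype.val hX'
        refine ⟨a.1, hfa, ?_⟩
        rw [hmmup]; exact (dif_neg a.2.2).trans (dif_pos a.2.1)
    have hprene : ∃ X, X ∈ g ⁻¹' {(⟨w', hw'⟩ : ↥(compSet P B i))} := by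
      obtain ⟨X, hX⟩ := hgsurj ⟨w', hw'⟩
      exact ⟨X, hX⟩
    obtain ⟨X0, hX0⟩ := hprene
    refine aux_connected_induce ⟨X0, hX0⟩ ?_
    intro X hX Y hY
    obtain ⟨aX, haX, hmX⟩ := hrepr X hX
    obtain ⟨aY, haY, hmY⟩ := hrepr Y hY
    have hfreach : (T.induce (f ⁻¹' {w'})).Reachable ⟨aX, haX⟩ ⟨aY, haY⟩ :=
      (hconn w').preconnected _ _
    have hmain := aux_reach_map
      (fun aa : ↥(f ⁻¹' {w'}) =>
        (⟨mmup aa.1, pfup aa.1 aa.2⟩ : ↥(g ⁻¹' {(⟨w', hw'⟩ : ↥(compSet P B i))})))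
      (fun aa bb' h => hadjmap aa bb' h) hfreach
    convert hmain using 1
    · exact (Subtype.ext hmX).symm
    · exact (Subtype.ext hmY).symm
  · -- edge realization
    rintro ⟨u', hu'⟩ ⟨w1', hw1'⟩ hadj'
    have hPadj : (P.deleteEdges {e | e ∈ B.edges}).Adj u' w1' := hadj'
    obtain ⟨a, b, hTab, hfa, hfb⟩ := hedge (SimpleGraph.deleteEdges_adj.mp hPadj).1
    have hain : inComps T C (z i) (z (i+1) - 1) a := hFS2 i hi a (by rw [hfa]; exact hu')
    have hbin : inComps T C (z i) (z (i+1) - 1) b := hFS2 i hi b (by rw [hfb]; exact hw1')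
    have hnCe : s(a, b) ∉ C.edges := by
      intro hmem
      have hca := hFS4 i hi a (by rw [hfa]; exact hu') (hCsupedge a b hmem).1
      have hcb := hFS4 i hi b (by rw [hfb]; exact hw1') (hCsupedge a b hmem).2
      have e1 : u' = bb i := by rw [← hfa]; exact hFS3 i hi a hca
      have e2 : w1' = bb i := by rw [← hfb]; exact hFS3 i hi b hcb
      exact (SimpleGraph.deleteEdges_adj.mp hPadj).1.ne (e1.trans e2.symm)
    have hfadj : (forestOf T C).Adj a b := SimpleGraph.deleteEdges_adj.mpr ⟨hTab, hnCe⟩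
    by_cases h1 : isCore T C (z i) (z (i+1) - 1) a <;>
      by_cases h2 : isCore T C (z i) (z (i+1) - 1) b
    · exfalso
      have e1 : u' = bb i := by rw [← hfa]; exact hFS3 i hi a h1
      have e2 : w1' = bb i := by rw [← hfb]; exact hFS3 i hi b h2
      exact (SimpleGraph.deleteEdges_adj.mp hPadj).1.ne (e1.trans e2.symm)
    · refine ⟨none, some ⟨b, hbin, h2⟩, ?_, ?_, Subtype.ext hfb⟩
      · exact (SimpleGraph.fromRel_adj _ _ _).mpr
          ⟨fun h => (nomatch h), Or.inl ⟨a, h1, hfadj⟩⟩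
      · have e1 : u' = bb i := by rw [← hfa]; exact hFS3 i hi a h1
        exact Subtype.ext (hrootval.trans e1.symm)
    · refine ⟨some ⟨a, hain, h1⟩, none, ?_, Subtype.ext hfa, ?_⟩
      · exact (SimpleGraph.fromRel_adj _ _ _).mpr
          ⟨fun h => (nomatch h), Or.inr ⟨b, h2, hfadj.symm⟩⟩
      · have e2 : w1' = bb i := by rw [← hfb]; exact hFS3 i hi b h2
        exact Subtype.ext (hrootval.trans e2.symm)
    · exact ⟨some ⟨a, hain, h1⟩, some ⟨b, hbin, h2⟩,
        (SimpleGraph.fromRel_adj _ _ _).mpr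
          ⟨fun hcon => hTab.ne (congrArg Subtype.val (Option.some.inj hcon)), Or.inl hfadj⟩,
        Subtype.ext hfa, Subtype.ext hfb⟩


end Forward

/-- Lobster–lobster containment. `T` and `P` are lobsters, `|V(P)| ≥ 2`, and
`B = (b_1,…,b_s)` is a backbone of `P`. Then `P` is a minor of `T` iff there are a path
`C = (c_1,…,c_t)` in `T` and indices `0 = z_0 < z_1 < … < z_s = t` (0-based) such that for
every `i < s` there is a minor embedding `g` of the component `P_i` of `P − E(B)` containing
`b_i` in the tree `T_{z_i, z_{i+1}−1}` (obtained from the union of the components of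
`T − E(C)` containing `c_{z_i},…,c_{z_{i+1}−1}` by contracting `{c_{z_i},…,c_{z_{i+1}−1}}`
to a single vertex `w_i`) with `g(w_i) = b_i`. -/
theorem stmt_16 {V W : Type*} [Fintype V] [Fintype W]
    (T : SimpleGraph V) (P : SimpleGraph W)
    (hT : T.IsTree) (hP : P.IsTree) (hW : 2 ≤ Fintype.card W)
    (hTlob : ∃ (u v : V) (w : T.Walk u v), w.IsPath ∧
      ∀ x : V, ∃ y ∈ w.support, T.dist x y ≤ 2)
    {b₁ bₛ : W} (B : P.Walk b₁ bₛ) (hB : B.IsPath)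
    (hBack : ∀ v : W, ∃ y ∈ B.support, P.dist v y ≤ 2) :
    (∃ f : V → W, IsMinorEmbedding T P f) ↔
    ∃ (c₁ cₜ : V) (C : T.Walk c₁ cₜ), C.IsPath ∧
      ∃ z : ℕ → ℕ, z 0 = 0 ∧ z B.support.length = C.support.length ∧
        (∀ i < B.support.length, z i < z (i + 1)) ∧
        ∀ i < B.support.length,
          ∃ g : ContrVert T C (z i) (z (i + 1) - 1) → compSet P B i,
            IsMinorEmbedding (ContrTree T C (z i) (z (i + 1) - 1)) (compGraph P B i) g ∧
            g none = compRoot P B i := by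
  constructor
  · rintro ⟨f, hf⟩
    exact aux_forward T P hT hP B hB f hf
  · rintro ⟨c₁', cₜ', C, hC, z, hz0, hzlen, hzmono, hgex⟩
    exact aux_backward T P hT hP B hB C hC z hz0 hzlen hzmono hgex
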